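/- Let P be a probability mass function on a finite alphabet 𝒳 and let X_1,…,X_N be drawn i.i.d. from P, with empirical distribution T. Then for every s > 0, the probability that V(T, P) ≥ s is at most 2^{|𝒳|+1} · e^{−2Ns²}. -/

import Mathlib

open MeasureTheory ProbabilityTheory

/-- Total variation distance between two probability mass functions on a
finite alphabet: `V(P,Q) = (1/2) * ∑ a, |P a - Q a|`. -/
noncomputable def tvDist {𝒳 : Type*} [Fintype 𝒳] (P Q : 𝒳 → ℝ) : ℝ :=
  (1 / 2) * ∑ a, |P a - Q a|

/-- Empirical distribution of a sample `x : Fin N → 𝒳`: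
`T a = (1/N) * #{k : x k = a}`. -/
noncomputable def empDist {𝒳 : Type*} [Fintype 𝒳] [DecidableEq 𝒳] {N : ℕ}
    (x : Fin N → 𝒳) : 𝒳 → ℝ :=
  fun a => ((Finset.univ.filter fun k => x k = a).card : ℝ) / N

lemma bern_d_pos {p : ℝ} (hp0 : 0 ≤ p) (hp1 : p ≤ 1) (x : ℝ) :
    0 < 1 - p + p * Real.exp x := by
  rcases lt_or_eq_of_le hp1 with h | h
  · nlinarith [Real.exp_pos x, mul_nonneg hp0 (Real.exp_pos x).le]
  · subst h; simpa using Real.exp_pos x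

/-- Hoeffding's lemma for Bernoulli random variables. -/
lemma bern_hoeffding {p : ℝ} (hp0 : 0 ≤ p) (hp1 : p ≤ 1) {t : ℝ} (ht : 0 ≤ t) :
    1 - p + p * Real.exp t ≤ Real.exp (p * t + t ^ 2 / 8) := by
  set d : ℝ → ℝ := fun x => 1 - p + p * Real.exp x with hd
  set q : ℝ → ℝ := fun x => p * Real.exp x / d x with hq
  have hdpos : ∀ x, 0 < d x := fun x => bern_d_pos hp0 hp1 x
  have hq01 : ∀ x, 0 ≤ q x ∧ q x ≤ 1 := by
    intro x
    constructor
    · exact div_nonneg (mul_nonneg hp0 (Real.exp_pos x).le) (hdpos x).le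
    · rw [div_le_one (hdpos x)]; simp only [hd]; nlinarith
  have hderiv_d : ∀ x, HasDerivAt d (p * Real.exp x) x := by
    intro x
    exact ((Real.hasDerivAt_exp x).const_mul p).const_add (1 - p)
  have hderiv_q : ∀ x, HasDerivAt q (q x * (1 - q x)) x := by
    intro x
    have h2 : HasDerivAt q ((p * Real.exp x * d x - p * Real.exp x * (p * Real.exp x)) / d x ^ 2) x := by
      exact ((Real.hasDerivAt_exp x).const_mul p).div (hderiv_d x) (hdpos x).ne'
    have hne : (1 - p + p * Real.exp x) ≠ 0 := (bern_d_pos hp0 hp1 x).ne'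
    convert h2 using 1
    simp only [hq, hd]
    field_simp
  have hlip : ∀ x, |q x - q 0| ≤ (1/4) * |x| := by
    intro x
    have := Convex.norm_image_sub_le_of_norm_hasDerivWithin_le
      (f := q) (f' := fun x => q x * (1 - q x)) (s := Set.univ) (C := 1/4)
      (fun y _ => (hderiv_q y).hasDerivWithinAt)
      (fun y _ => by
        have h1 := (hq01 y).1
        have h2 := (hq01 y).2
        rw [Real.norm_eq_abs, abs_le]
        refine ⟨?_, ?_⟩
        · show -(1/4) ≤ q y * (1 - q y); nlinarith
        · show q y * (1 - q y) ≤ 1/4; nlinarith [sq_nonneg (q y - 1/2)])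
      convex_univ (Set.mem_univ 0) (Set.mem_univ x)
    simpa [Real.norm_eq_abs] using this
  have hq0 : q 0 = p := by simp [hq, hd]
  set G : ℝ → ℝ := fun x => p * x + x ^ 2 / 8 - Real.log (d x) with hG
  have hderiv_G : ∀ x, HasDerivAt G (p + x / 4 - q x) x := by
    intro x
    have hlog : HasDerivAt (fun y => Real.log (d y)) (p * Real.exp x / d x) x :=
      (hderiv_d x).log (hdpos x).ne'
    have h1 : HasDerivAt (fun y => p * y + y ^ 2 / 8) (p + 2 * x / 8) x := by
      exact (((hasDerivAt_id x).const_mul p).add (((hasDerivAt_pow 2 x)).div_const 8)).congr_deriv (by norm_num)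
    refine (h1.sub hlog).congr_deriv ?_
    simp only [hq]; ring
  have hmono : MonotoneOn G (Set.Ici (0:ℝ)) := by
    apply monotoneOn_of_hasDerivWithinAt_nonneg (convex_Ici 0)
      (fun x _ => (hderiv_G x).continuousAt.continuousWithinAt)
      (f' := fun x => p + x / 4 - q x)
      (fun x hx => (hderiv_G x).hasDerivWithinAt)
    intro x hx
    rw [interior_Ici] at hx
    have h := hlip x
    rw [hq0, abs_le] at h
    have hxabs : |x| = x := abs_of_pos hx
    rw [hxabs] at h
    linarith [h.2]
  have hG0 : G 0 = 0 := by simp [hG, hd]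
  have := hmono (Set.self_mem_Ici) (Set.mem_Ici.2 ht) ht
  rw [hG0] at this
  have hlog_le : Real.log (d t) ≤ p * t + t ^ 2 / 8 := by
    simp only [hG] at this; linarith
  calc d t = Real.exp (Real.log (d t)) := (Real.exp_log (hdpos t)).symm
    _ ≤ Real.exp (p * t + t ^ 2 / 8) := Real.exp_le_exp.2 hlog_le

/-- Chernoff–Hoeffding tail bound for a sum of `[0,1]`-Bernoulli-type variables. -/
lemma binom_tail {Ω : Type*} [MeasurableSpace Ω] (μ : Measure Ω) [IsProbabilityMeasure μ]
    {N : ℕ} (Y : Fin N → Ω → ℝ) (hYmeas : ∀ k, Measurable (Y k))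
    (hYindep : iIndepFun Y μ)
    {p : ℝ} (hp0 : 0 ≤ p) (hp1 : p ≤ 1)
    (hint : ∀ k t, Integrable (fun ω => Real.exp (t * Y k ω)) μ)
    (hmgf : ∀ k t, mgf (Y k) μ t ≤ 1 - p + p * Real.exp t)
    {s : ℝ} (hs : 0 < s) :
    (μ {ω | (N : ℝ) * (p + s) ≤ ∑ k, Y k ω}).toReal ≤
      Real.exp (-2 * N * s ^ 2) := by
  set t : ℝ := 4 * s with htdef
  have ht : 0 ≤ t := by positivity
  have hintsum : Integrable (fun ω => Real.exp (t * (∑ k, Y k) ω)) μ :=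
    hYindep.integrable_exp_mul_sum hYmeas (fun i _ => hint i t)
  have hset : {ω | (N : ℝ) * (p + s) ≤ ∑ k, Y k ω}
      = {ω | (N : ℝ) * (p + s) ≤ (∑ k, Y k) ω} := by
    ext ω; simp [Finset.sum_apply]
  rw [hset]
  have hcher := measure_ge_le_exp_mul_mgf (μ := μ) (X := ∑ k, Y k)
    ((N : ℝ) * (p + s)) ht hintsum
  refine hcher.trans ?_
  have hmgf_sum : mgf (∑ k, Y k) μ t ≤ Real.exp (p * t + t ^ 2 / 8) ^ N := by
    rw [hYindep.mgf_sum hYmeas]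
    calc ∏ k : Fin N, mgf (Y k) μ t
        ≤ ∏ _k : Fin N, Real.exp (p * t + t ^ 2 / 8) := by
          apply Finset.prod_le_prod (fun k _ => mgf_nonneg)
          exact fun k _ => (hmgf k t).trans (bern_hoeffding hp0 hp1 ht)
      _ = Real.exp (p * t + t ^ 2 / 8) ^ N := by simp
  calc Real.exp (-t * ((N : ℝ) * (p + s))) * mgf (∑ k, Y k) μ t
      ≤ Real.exp (-t * ((N : ℝ) * (p + s))) * Real.exp (p * t + t ^ 2 / 8) ^ N := by
        gcongr
    _ = Real.exp (-2 * N * s ^ 2) := by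
        rw [← Real.exp_nat_mul, ← Real.exp_add]
        congr 1
        simp only [htdef]
        ring

lemma tv_exists_F {𝒳 : Type*} [Fintype 𝒳] (T P : 𝒳 → ℝ)
    (hT : ∑ a, T a = 1) (hP : ∑ a, P a = 1) :
    ∃ F : Finset 𝒳, tvDist T P = ∑ a ∈ F, (T a - P a) := by
  classical
  refine ⟨Finset.univ.filter fun a => P a ≤ T a, ?_⟩
  have h1 : ∑ a ∈ Finset.univ.filter fun a => P a ≤ T a, |T a - P a|
      = ∑ a ∈ Finset.univ.filter fun a => P a ≤ T a, (T a - P a) :=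
    Finset.sum_congr rfl fun a ha => abs_of_nonneg
      (sub_nonneg.2 (Finset.mem_filter.1 ha).2)
  have h2 : ∑ a ∈ Finset.univ.filter fun a => ¬ P a ≤ T a, |T a - P a|
      = ∑ a ∈ Finset.univ.filter fun a => ¬ P a ≤ T a, -(T a - P a) :=
    Finset.sum_congr rfl fun a ha => abs_of_neg
      (sub_neg.2 (lt_of_not_ge (Finset.mem_filter.1 ha).2))
  have hsplit := Finset.sum_filter_add_sum_filter_not Finset.univ
    (fun a => P a ≤ T a) (fun a => T a - P a)
  have habs := Finset.sum_filter_add_sum_filter_not Finset.univ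
    (fun a => P a ≤ T a) (fun a => |T a - P a|)
  have hzero : ∑ a, (T a - P a) = 0 := by
    rw [Finset.sum_sub_distrib, hT, hP]; ring
  rw [Finset.sum_neg_distrib] at h2
  unfold tvDist
  linarith

lemma fiber_card {𝒳 : Type*} [Fintype 𝒳] [DecidableEq 𝒳] {N : ℕ}
    (x : Fin N → 𝒳) (F : Finset 𝒳) :
    ∑ a ∈ F, (Finset.univ.filter fun k => x k = a).card
      = (Finset.univ.filter fun k => x k ∈ F).card := by
  classical
  rw [Finset.card_eq_sum_card_fiberwise (f := x)
    (s := Finset.univ.filter fun k => x k ∈ F)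
    (t := F) (fun k hk => (Finset.mem_filter.1 hk).2)]
  refine Finset.sum_congr rfl fun a ha => ?_
  congr 1
  ext k
  simp only [Finset.mem_filter, Finset.mem_univ, true_and, Finset.filter_filter]
  exact ⟨fun h => ⟨h ▸ ha, h⟩, fun h => h.2⟩

theorem stmt_3 {𝒳 : Type*} [Fintype 𝒳] [DecidableEq 𝒳] [MeasurableSpace 𝒳]
    [MeasurableSingletonClass 𝒳]
    {Ω : Type*} [MeasurableSpace Ω] (μ : Measure Ω) [IsProbabilityMeasure μ]
    (P : 𝒳 → ℝ) (hP0 : ∀ a, 0 ≤ P a) (hP1 : ∑ a, P a = 1)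
    {N : ℕ} (hN : 0 < N) (X : Fin N → Ω → 𝒳)
    (hmeas : ∀ k, Measurable (X k))
    (hindep : iIndepFun X μ)
    (hdist : ∀ k a, μ (X k ⁻¹' {a}) = ENNReal.ofReal (P a))
    (s : ℝ) (hs : 0 < s) :
    (μ {ω | s ≤ tvDist (empDist fun k => X k ω) P}).toReal ≤
      2 ^ (Fintype.card 𝒳 + 1) * Real.exp (-2 * N * s ^ 2) := by
  classical
  set pF : Finset 𝒳 → ℝ := fun F => ∑ a ∈ F, P a with hpF
  have hpF0 : ∀ F, 0 ≤ pF F := fun F => Finset.sum_nonneg fun a _ => hP0 a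
  have hpF1 : ∀ F, pF F ≤ 1 := fun F => by
    rw [← hP1]
    exact Finset.sum_le_sum_of_subset_of_nonneg (Finset.subset_univ F)
      fun a _ _ => hP0 a
  set g : Finset 𝒳 → 𝒳 → ℝ := fun F a => if a ∈ F then 1 else 0 with hg
  set Y : Finset 𝒳 → Fin N → Ω → ℝ := fun F k => g F ∘ X k with hY
  set E : Finset 𝒳 → Set Ω :=
    fun F => {ω | (N : ℝ) * (pF F + s) ≤ ∑ k, Y F k ω} with hE
  have hNpos : (0:ℝ) < N := by exact_mod_cast hN
  -- inclusion in a finite union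
  have hsub : {ω | s ≤ tvDist (empDist fun k => X k ω) P}
      ⊆ ⋃ F ∈ (Finset.univ : Finset (Finset 𝒳)), E F := by
    intro ω hω
    have hTsum : ∑ a, empDist (fun k => X k ω) a = 1 := by
      unfold empDist
      rw [← Finset.sum_div]
      have : ∑ a, ((Finset.univ.filter fun k => X k ω = a).card : ℝ) = (N:ℝ) := by
        rw [← Nat.cast_sum]
        norm_cast
        rw [fiber_card (fun k => X k ω) Finset.univ]
        simp
      rw [this]
      field_simp
    obtain ⟨F, hF⟩ := tv_exists_F _ P hTsum hP1
    refine Set.mem_iUnion.2 ⟨F, Set.mem_iUnion.2 ⟨Finset.mem_univ F, ?_⟩⟩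
    have hω' : s ≤ ∑ a ∈ F, (empDist (fun k => X k ω) a - P a) := by
      rw [← hF]; exact hω
    have hsum : ∑ k, Y F k ω
        = ((Finset.univ.filter fun k => X k ω ∈ F).card : ℝ) := by
      simp [hY, hg, Finset.sum_boole]
    have hTF : ∑ a ∈ F, empDist (fun k => X k ω) a
        = ((Finset.univ.filter fun k => X k ω ∈ F).card : ℝ) / N := by
      unfold empDist
      rw [← Finset.sum_div]
      congr 1
      rw [← Nat.cast_sum]
      norm_cast
      exact fiber_card _ F
    show (N : ℝ) * (pF F + s) ≤ ∑ k, Y F k ω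
    rw [hsum]
    rw [Finset.sum_sub_distrib, hTF] at hω'
    rw [mul_comm, ← le_div_iff₀ hNpos]
    have : pF F = ∑ a ∈ F, P a := rfl
    linarith
  -- union bound
  have hmeasle : μ {ω | s ≤ tvDist (empDist fun k => X k ω) P}
      ≤ ∑ F : Finset 𝒳, μ (E F) :=
    (measure_mono hsub).trans (measure_biUnion_finset_le _ _)
  -- per-F tail bound
  have hperF : ∀ F : Finset 𝒳, (μ (E F)).toReal ≤ Real.exp (-2 * N * s ^ 2) := by
    intro F
    have hgmeas : Measurable (g F) := measurable_of_countable _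
    have hYmeas : ∀ k, Measurable (Y F k) := fun k => hgmeas.comp (hmeas k)
    have hYindep : iIndepFun (Y F) μ :=
      hindep.comp (fun _ => g F) (fun _ => hgmeas)
    have hAmeas : ∀ k : Fin N, MeasurableSet (X k ⁻¹' (↑F : Set 𝒳)) :=
      fun k => (hmeas k) F.finite_toSet.measurableSet
    have hYeq : ∀ k, Y F k = Set.indicator (X k ⁻¹' (↑F : Set 𝒳)) (1 : Ω → ℝ) := by
      intro k; funext ω
      simp [hY, hg, Set.indicator_apply]
    have hYint : ∀ k, Integrable (Y F k) μ := fun k => by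
      rw [hYeq k]; exact (integrable_const 1).indicator (hAmeas k)
    have hrw : ∀ k (t : ℝ), (fun ω => Real.exp (t * Y F k ω))
        = fun ω => (Real.exp t - 1) * Y F k ω + 1 := by
      intro k t
      funext ω
      simp only [hY, hg, Function.comp_apply]
      by_cases h : X k ω ∈ F <;> simp [h]
    have hint : ∀ k (t : ℝ), Integrable (fun ω => Real.exp (t * Y F k ω)) μ := by
      intro k t
      rw [hrw k t]
      exact ((hYint k).const_mul _).add (integrable_const 1)
    have hμA : ∀ k, μ (X k ⁻¹' (↑F : Set 𝒳)) = ENNReal.ofReal (pF F) := by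
      intro k
      have hU : X k ⁻¹' (↑F : Set 𝒳) = ⋃ a ∈ F, X k ⁻¹' {a} := by
        ext ω; simp
      rw [hU, measure_biUnion_finset ?_ (fun a _ => hmeas k (measurableSet_singleton a))]
      · simp_rw [hdist]
        exact (ENNReal.ofReal_sum_of_nonneg fun a _ => hP0 a).symm
      · intro a ha b hb hab
        exact Disjoint.preimage _ (by simp [hab])
    have hmgf : ∀ k (t : ℝ), mgf (Y F k) μ t ≤ 1 - pF F + pF F * Real.exp t := by
      intro k t
      have hintY : Integrable (fun ω => (Real.exp t - 1) * Y F k ω) μ :=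
        (hYint k).const_mul _
      rw [mgf, hrw k t, integral_add hintY (integrable_const 1),
        integral_const_mul, integral_const, probReal_univ]
      rw [hYeq k, integral_indicator_one (hAmeas k), measureReal_def, hμA k,
        ENNReal.toReal_ofReal (hpF0 F)]
      simp only [ENNReal.toReal_one, smul_eq_mul, one_mul]
      nlinarith [hpF0 F]
    exact binom_tail μ (Y F) hYmeas hYindep (hpF0 F) (hpF1 F) hint hmgf hs
  -- combine
  calc (μ {ω | s ≤ tvDist (empDist fun k => X k ω) P}).toReal
      ≤ (∑ F : Finset 𝒳, μ (E F)).toReal := by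
        apply ENNReal.toReal_mono _ hmeasle
        exact (ENNReal.sum_lt_top.2 fun F _ => measure_lt_top μ _).ne
    _ = ∑ F : Finset 𝒳, (μ (E F)).toReal :=
        ENNReal.toReal_sum fun F _ => measure_ne_top μ _
    _ ≤ ∑ _F : Finset 𝒳, Real.exp (-2 * N * s ^ 2) :=
        Finset.sum_le_sum fun F _ => hperF F
    _ = (Fintype.card (Finset 𝒳) : ℝ) * Real.exp (-2 * N * s ^ 2) := by
        rw [Finset.sum_const, nsmul_eq_mul, Finset.card_univ]
    _ ≤ 2 ^ (Fintype.card 𝒳 + 1) * Real.exp (-2 * N * s ^ 2) := by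
        apply mul_le_mul_of_nonneg_right _ (Real.exp_nonneg _)
        rw [Fintype.card_finset]
        push_cast
        exact pow_le_pow_right₀ one_le_two (Nat.le_succ _)
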